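/- Let $p \geq 2$, $n \geq 2$, and $d = p - 1 + p^{n-1}$. Then for every $0 \leq m \leq n-2$, $1 - \frac{1}{p^{n-m}} - \sum_{l=m}^{n-1}\frac{D_d^{(l)}}{p^{2n-1-l}} \leq 1 - \frac{D_d^{(n-2)}}{p^{n+1}} - \frac{D_d^{(n-1)}}{p^n}$, where $D_d^{(l)} = p^{n-1}(S_d^{(l)} - (p-1)\sum_{j=l+1}^{n-1}p^{l-j}S_d^{(j)})$ and each $D_d^{(l)} \geq 0$. -/

import Mathlib

/-- Sum of the `(m+1)`-th base-`p` digits of `0, 1, ..., d-1`. -/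
def digitSum (p d m : ℕ) : ℕ := ∑ i ∈ Finset.range d, i / p ^ m % p

/-- The invariant `D_d^{(m)} = p^{n-1}(S_d^{(m)} - (p-1) ∑_{l=m+1}^{n-1} p^{m-l} S_d^{(l)})`. -/
def Dinv (p n d m : ℕ) : ℚ :=
  (p : ℚ) ^ (n - 1) * ((digitSum p d m : ℚ) -
    ((p : ℚ) - 1) * ∑ l ∈ Finset.Icc (m + 1) (n - 1),
      (p : ℚ) ^ ((m : ℤ) - (l : ℤ)) * (digitSum p d l : ℚ))

lemma sum_range_add' (f : ℕ → ℕ) (N b : ℕ) :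
    ∑ i ∈ Finset.range (N + b), f i
      = (∑ i ∈ Finset.range N, f i) + ∑ j ∈ Finset.range b, f (N + j) := by
  induction b with
  | zero => simp
  | succ b ih =>
      rw [← Nat.add_assoc, Finset.sum_range_succ, ih, Finset.sum_range_succ, Nat.add_assoc]

lemma sum_range_mul' (f : ℕ → ℕ) (c b : ℕ) :
    ∑ i ∈ Finset.range (c * b), f i
      = ∑ a ∈ Finset.range c, ∑ r ∈ Finset.range b, f (a * b + r) := by
  induction c with
  | zero => simp
  | succ c ih =>
      rw [Nat.succ_mul, sum_range_add', ih, Finset.sum_range_succ]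

/-- Sum of the `l`-th digits over a full power block. -/
lemma sum_digits_pow (p k l : ℕ) (hp : 2 ≤ p) (hlk : l < k) :
    ∑ i ∈ Finset.range (p ^ k), i / p ^ l % p
      = p ^ (k - 1) * ∑ s ∈ Finset.range p, s := by
  have hppos : 0 < p := by omega
  have hplpos : 0 < p ^ l := pow_pos hppos l
  have hk : p ^ k = p ^ (k - l - 1) * p ^ (l + 1) := by
    rw [← pow_add]; congr 1; omega
  rw [hk, sum_range_mul']
  have inner : ∀ a : ℕ, (∑ r ∈ Finset.range (p ^ (l + 1)), (a * p ^ (l + 1) + r) / p ^ l % p)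
      = p ^ l * ∑ s ∈ Finset.range p, s := by
    intro a
    have h1 : ∀ r < p ^ (l + 1), (a * p ^ (l + 1) + r) / p ^ l % p = r / p ^ l := by
      intro r hr
      have : a * p ^ (l + 1) + r = p ^ l * (a * p) + r := by ring
      rw [this, Nat.mul_add_div hplpos]
      have hrl : r / p ^ l < p := by
        apply Nat.div_lt_of_lt_mul
        rw [← pow_succ]; exact hr
      rw [Nat.mul_comm a p, Nat.mul_add_mod, Nat.mod_eq_of_lt hrl]
    rw [Finset.sum_congr rfl (fun r hr => h1 r (Finset.mem_range.mp hr))]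
    have h2 : p ^ (l + 1) = p * p ^ l := by rw [pow_succ']
    rw [h2, sum_range_mul']
    have h3 : ∀ s ∈ Finset.range p, (∑ t ∈ Finset.range (p ^ l), (s * p ^ l + t) / p ^ l) = p ^ l * s := by
      intro s _
      have : ∀ t ∈ Finset.range (p ^ l), (s * p ^ l + t) / p ^ l = s := by
        intro t ht
        rw [Nat.mul_comm s (p ^ l)]
        rw [Nat.mul_add_div hplpos, Nat.div_eq_of_lt (Finset.mem_range.mp ht), Nat.add_zero]
      rw [Finset.sum_congr rfl this, Finset.sum_const, Finset.card_range, smul_eq_mul]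
    rw [Finset.sum_congr rfl h3, ← Finset.mul_sum]
  rw [Finset.sum_congr rfl (fun a _ => inner a), Finset.sum_const, Finset.card_range, smul_eq_mul,
    ← Nat.mul_assoc, ← pow_add]
  rw [show k - l - 1 + l = k - 1 from by omega]

lemma digitSum_mid (p n d : ℕ) (hp : 2 ≤ p) (hn : 2 ≤ n) (hd : d = p - 1 + p ^ (n - 1))
    (l : ℕ) (hl1 : 1 ≤ l) (hl2 : l ≤ n - 2) :
    digitSum p d l = p ^ (n - 2) * ∑ s ∈ Finset.range p, s := by
  have hd' : d = p ^ (n - 1) + (p - 1) := by omega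
  unfold digitSum
  rw [hd', sum_range_add']
  have h2 : ∀ j ∈ Finset.range (p - 1), (p ^ (n - 1) + j) / p ^ l % p = 0 := by
    intro j hj
    have hj' : j < p ^ l := lt_of_lt_of_le (by have := Finset.mem_range.mp hj; omega)
      (Nat.le_self_pow (by omega) p)
    have hsplit : p ^ (n - 1) = p ^ l * (p * p ^ (n - 2 - l)) := by
      rw [← pow_succ', ← pow_add]; congr 1; omega
    rw [hsplit, Nat.mul_add_div (pow_pos (by omega : 0 < p) l),
      Nat.div_eq_of_lt hj', Nat.add_zero, Nat.mul_mod_right]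
  rw [Finset.sum_congr rfl h2, Finset.sum_const, smul_eq_mul, Nat.mul_zero, Nat.add_zero]
  rw [sum_digits_pow p (n - 1) l hp (by omega)]
  congr 2

lemma digitSum_zero_ge (p n d : ℕ) (hp : 2 ≤ p) (hn : 2 ≤ n) (hd : d = p - 1 + p ^ (n - 1)) :
    p ^ (n - 2) * ∑ s ∈ Finset.range p, s ≤ digitSum p d 0 := by
  have h1 : ∑ i ∈ Finset.range (p ^ (n - 1)), i / p ^ 0 % p ≤ digitSum p d 0 := by
    unfold digitSum
    apply Finset.sum_le_sum_of_subset
    apply Finset.range_subset_range.mpr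
    omega
  rw [sum_digits_pow p (n - 1) 0 hp (by omega)] at h1
  have : n - 1 - 1 = n - 2 := by omega
  rwa [this] at h1

lemma digitSum_top (p n d : ℕ) (hp : 2 ≤ p) (hn : 2 ≤ n) (hd : d = p - 1 + p ^ (n - 1)) :
    digitSum p d (n - 1) = p - 1 := by
  have hd' : d = p ^ (n - 1) + (p - 1) := by omega
  unfold digitSum
  rw [hd', sum_range_add']
  have h1 : ∀ i ∈ Finset.range (p ^ (n - 1)), i / p ^ (n - 1) % p = 0 := by
    intro i hi
    rw [Nat.div_eq_of_lt (Finset.mem_range.mp hi), Nat.zero_mod]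
  have h2 : ∀ j ∈ Finset.range (p - 1), (p ^ (n - 1) + j) / p ^ (n - 1) % p = 1 := by
    intro j hj
    have hj' : j < p ^ (n - 1) := lt_of_lt_of_le (by have := Finset.mem_range.mp hj; omega)
      (Nat.le_self_pow (by omega) p)
    have : p ^ (n - 1) + j = p ^ (n - 1) * 1 + j := by ring
    rw [this, Nat.mul_add_div (pow_pos (by omega : 0 < p) _), Nat.div_eq_of_lt hj',
      Nat.add_zero, Nat.mod_eq_of_lt (by omega)]
  rw [Finset.sum_congr rfl h1, Finset.sum_congr rfl h2]
  simp

lemma gauss_ge (p : ℕ) (hp : 2 ≤ p) : p - 1 ≤ ∑ s ∈ Finset.range p, s := by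
  apply Finset.single_le_sum (f := fun s => s) (fun _ _ => Nat.zero_le _)
  exact Finset.mem_range.mpr (by omega)

lemma digitSum_mono (p n d : ℕ) (hp : 2 ≤ p) (hn : 2 ≤ n) (hd : d = p - 1 + p ^ (n - 1))
    (m : ℕ) (hm : m + 1 ≤ n - 1) :
    digitSum p d (m + 1) ≤ digitSum p d m := by
  have hupper : digitSum p d (m + 1) ≤ p ^ (n - 2) * ∑ s ∈ Finset.range p, s := by
    rcases eq_or_lt_of_le hm with h | h
    · rw [h, digitSum_top p n d hp hn hd]
      calc p - 1 ≤ ∑ s ∈ Finset.range p, s := gauss_ge p hp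
        _ ≤ p ^ (n - 2) * ∑ s ∈ Finset.range p, s := Nat.le_mul_of_pos_left _
            (pow_pos (by omega : 0 < p) _)
    · rw [digitSum_mid p n d hp hn hd (m + 1) (by omega) (by omega)]
  have hlower : p ^ (n - 2) * ∑ s ∈ Finset.range p, s ≤ digitSum p d m := by
    rcases Nat.eq_zero_or_pos m with h | h
    · rw [h]; exact digitSum_zero_ge p n d hp hn hd
    · rw [digitSum_mid p n d hp hn hd m (by omega) (by omega)]
  omega

lemma Dinv_rec (p n d : ℕ) (hp : 2 ≤ p) (m : ℕ) (hm : m + 1 ≤ n - 1) :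
    Dinv p n d m = (p : ℚ) ^ (n - 1) * ((digitSum p d m : ℚ) - (digitSum p d (m + 1) : ℚ))
      + Dinv p n d (m + 1) / p := by
  have hp0 : (p : ℚ) ≠ 0 := by
    have : (0:ℚ) < p := by exact_mod_cast Nat.lt_of_lt_of_le Nat.zero_lt_two hp
    exact ne_of_gt this
  unfold Dinv
  have hIcc : Finset.Icc (m + 1) (n - 1) = insert (m + 1) (Finset.Icc (m + 1 + 1) (n - 1)) := by
    rw [Finset.Icc_add_one_left_eq_Ioc (m + 1) (n - 1), Finset.Ioc_insert_left hm]
  have hnot : m + 1 ∉ Finset.Icc (m + 1 + 1) (n - 1) := by simp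
  rw [hIcc, Finset.sum_insert hnot]
  have key : ∀ l ∈ Finset.Icc (m + 1 + 1) (n - 1),
      (p : ℚ) ^ ((m : ℤ) - (l : ℤ)) * (digitSum p d l : ℚ)
        = ((p : ℚ) ^ (((m + 1 : ℕ) : ℤ) - (l : ℤ)) * (digitSum p d l : ℚ)) / p := by
    intro l _
    rw [show ((m : ℤ) - (l : ℤ)) = ((((m + 1 : ℕ) : ℤ)) - (l : ℤ)) - 1 by push_cast; ring,
      zpow_sub_one₀ hp0]
    ring
  rw [Finset.sum_congr rfl key, ← Finset.sum_div]
  rw [show ((m : ℤ) - ((m + 1 : ℕ) : ℤ)) = -1 by push_cast; ring, zpow_neg_one]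
  field_simp
  ring

lemma Dinv_nonneg_aux (p n d : ℕ) (hp : 2 ≤ p) (hn : 2 ≤ n) (hd : d = p - 1 + p ^ (n - 1)) :
    ∀ j m, n - 1 = m + j → 0 ≤ Dinv p n d m := by
  intro j
  induction j with
  | zero =>
      intro m hm
      unfold Dinv
      rw [Finset.Icc_eq_empty (by omega)]
      simp
      positivity
  | succ j ih =>
      intro m hm
      rw [Dinv_rec p n d hp m (by omega)]
      have h1 : 0 ≤ Dinv p n d (m + 1) := ih (m + 1) (by omega)
      have h2 : (digitSum p d (m + 1) : ℚ) ≤ (digitSum p d m : ℚ) := by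
        exact_mod_cast digitSum_mono p n d hp hn hd m (by omega)
      have hp0 : (0 : ℚ) < p := by exact_mod_cast Nat.lt_of_lt_of_le Nat.zero_lt_two hp
      have := div_nonneg h1 (le_of_lt hp0)
      nlinarith [pow_pos hp0 (n - 1)]

theorem stmt19 (p n d : ℕ) (hp : p.Prime) (hn : 2 ≤ n) (hd : d = p - 1 + p ^ (n - 1)) :
    (∀ l ≤ n - 1, 0 ≤ Dinv p n d l) ∧
    ∀ m ≤ n - 2,
      1 - 1 / (p : ℚ) ^ (n - m) -
          ∑ l ∈ Finset.Icc m (n - 1), Dinv p n d l / (p : ℚ) ^ (2 * n - 1 - l) ≤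
        1 - Dinv p n d (n - 2) / (p : ℚ) ^ (n + 1) - Dinv p n d (n - 1) / (p : ℚ) ^ n := by
  have hp2 : 2 ≤ p := hp.two_le
  have part1 : ∀ l ≤ n - 1, 0 ≤ Dinv p n d l := by
    intro l hl
    exact Dinv_nonneg_aux p n d hp2 hn hd (n - 1 - l) l (by omega)
  refine ⟨part1, ?_⟩
  intro m hm
  have hppos : (0 : ℚ) < p := by exact_mod_cast Nat.lt_of_lt_of_le Nat.zero_lt_two hp2
  have hterm : ∀ l ∈ Finset.Icc m (n - 1), 0 ≤ Dinv p n d l / (p : ℚ) ^ (2 * n - 1 - l) := by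
    intro l hl
    exact div_nonneg (part1 l (Finset.mem_Icc.mp hl).2) (by positivity)
  have hsub : ({n - 2, n - 1} : Finset ℕ) ⊆ Finset.Icc m (n - 1) := by
    intro x hx
    simp only [Finset.mem_insert, Finset.mem_singleton] at hx
    rcases hx with h | h <;> (subst h; exact Finset.mem_Icc.mpr (by omega))
  have hpair : ∑ l ∈ ({n - 2, n - 1} : Finset ℕ), Dinv p n d l / (p : ℚ) ^ (2 * n - 1 - l)
      = Dinv p n d (n - 2) / (p : ℚ) ^ (n + 1) + Dinv p n d (n - 1) / (p : ℚ) ^ n := by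
    rw [Finset.sum_pair (by omega : n - 2 ≠ n - 1)]
    rw [show 2 * n - 1 - (n - 2) = n + 1 by omega, show 2 * n - 1 - (n - 1) = n by omega]
  have hle : ∑ l ∈ ({n - 2, n - 1} : Finset ℕ), Dinv p n d l / (p : ℚ) ^ (2 * n - 1 - l)
      ≤ ∑ l ∈ Finset.Icc m (n - 1), Dinv p n d l / (p : ℚ) ^ (2 * n - 1 - l) :=
    Finset.sum_le_sum_of_subset_of_nonneg hsub (fun i hi _ => hterm i hi)
  have hrec : (0 : ℚ) ≤ 1 / (p : ℚ) ^ (n - m) := by positivity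
  rw [hpair] at hle
  linarith
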